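/- Define a relation → on JK by declaring (j,k) → (j′,k′) if and only if the variable x(j,k) divides some monomial of total degree at least 2 of D̂^P_{j′,k′}. Then → has no directed cycles; equivalently, the reflexive-transitive closure of → is a partial order on JK. -/

import Mathlib

open scoped Classical

noncomputable section

/-- The type of indeterminates: `Sum.inl (a,b)` is `x(a,b)`, `Sum.inr (a,b)` is `y(a,b)`. -/
abbrev KVar : Type := (ℕ × ℕ) ⊕ (ℕ × ℕ)

/-- The polynomial ring `R = ℂ[x(a,b), y(a,b)]`. -/
abbrev KR : Type := MvPolynomial KVar ℂ

/-- The indeterminate `x(a,b)`. -/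
noncomputable def Xv (a b : ℕ) : KR := MvPolynomial.X (Sum.inl (a, b))

/-- The indeterminate `y(a,b)`. -/
noncomputable def Yv (a b : ℕ) : KR := MvPolynomial.X (Sum.inr (a, b))

/-- `B(P) = ∪_{j=1}^n [i_{2j-1}+1, i_{2j}]`. -/
def Bfin (n : ℕ) (i : ℕ → ℕ) : Finset ℕ :=
  (Finset.Icc 1 n).biUnion fun j => Finset.Icc (i (2*j-1) + 1) (i (2*j))

/-- The set of indices `j ∈ [1,n]` with `i_{2j} = i_{2j-1}` (indexing `A(P)`). -/
def Apairs (n : ℕ) (i : ℕ → ℕ) : Finset ℕ :=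
  (Finset.Icc 1 n).filter fun j => i (2*j) = i (2*j-1)

/-- `A(P) = {i_{2j} : j ∈ [1,n], i_{2j} = i_{2j-1}}`. -/
def Aval (n : ℕ) (i : ℕ → ℕ) : Finset ℕ := (Apairs n i).image fun j => i (2*j)

/-- `e_2(P)`. -/
def e2P (n : ℕ) (i : ℕ → ℕ) : ℕ := ∑ j ∈ Finset.Icc 1 n, (i (2*j) - i (2*j-1))

/-- `e_1(P)`. -/
def e1P (n : ℕ) (i : ℕ → ℕ) : ℕ := n + e2P n i

/-- The entry of the matrix `N²(P)` in row labelled `a` and column labelled `b`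
(labels run from `1` to `m-3`). -/
def N2e (m n : ℕ) (i : ℕ → ℕ) (a b : ℕ) : KR :=
  if a ∈ Bfin n i ∧ 1 ≤ b ∧ b ≤ m - 3 then
    (if b = a then 1
     else if b ∉ Bfin n i ∧ a < b then Xv a b else 0)
  else 0

/-- The entry of the row of `S′(P)` indexed by `j ∈ Apairs` in column `b ∈ [1, m-2]`. -/
def sprimeEnt (m n : ℕ) (i : ℕ → ℕ) (j b : ℕ) : KR :=
  if j ∈ Apairs n i then
    (if b = i (2*j) + 1 then 1
     else if i (2*j) + 2 ≤ b ∧ b ≤ m - 2 ∧ b ∉ Aval n i ∪ Bfin n i then Yv (i (2*j) + 1) b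
     else 0)
  else 0

/-- The entry of `N¹(P)` (equivalently of `N_1(P)`): row labels are encoded as natural
numbers, a row `ā` of `N̄(P)` being encoded as `a`, a row `a̲` of `N̲(P)` as `m + a`, and the
row of `S′(P)` corresponding to the pair indexed by `j` as `2m + j`.  Column labels run
from `1` to `m-2`. -/
def N1e (m n : ℕ) (i : ℕ → ℕ) (r b : ℕ) : KR :=
  if r ≤ m then N2e m n i r b
  else if r ≤ 2*m then N2e m n i (r - m) (b - 1)
  else sprimeEnt m n i (r - 2*m) b

/-- The (encoded) labels of the rows of `N_1(P)`, i.e. of the nonzero rows of `N¹(P)`. -/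
def rowsFS (m n : ℕ) (i : ℕ → ℕ) : Finset ℕ :=
  Bfin n i ∪ (Bfin n i).image (fun a => m + a) ∪ (Apairs n i).image (fun j => 2*m + j)

/-- The column labels of `N_1(P)`. -/
def colsFS (m : ℕ) : Finset ℕ := Finset.Icc 1 (m - 2)

/-- `|L^P(j,k)|`, given the block indices `ν, μ`. -/
def numL (n : ℕ) (i : ℕ → ℕ) (ν μ j k : ℕ) : ℕ :=
  if k = i (2*n+1) ∧ i (2*n) + 1 < i (2*n+1) ∧ j = i (2*ν-1) + 1 then 1
  else if k = i (2*n+1) ∧ i (2*n) + 1 = i (2*n+1) then 1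
  else if j < i (2*ν) ∧ k < i (2*μ+1) then 2
  else 0

/-- `φ_η^{(j,k)}` on an (unframed) tuple whose last index is `α`, with last entry `mcur`
and next-to-last entry `mprev`. -/
def phiT (i : ℕ → ℕ) (η k : ℕ) (α mcur mprev : ℕ) : KR :=
  if α = 0 then 1
  else if α = 1 then (if η = 1 then Xv (i (2*mcur)) k else Xv (i (2*mcur+1) + 1) (k+1))
  else if α % 2 = 0 then
    (if η = 1 then Xv (i (2*mcur+1) + 1) (i (2*mprev) + 1) else Xv (i (2*mcur)) (i (2*mprev+1)))
  else
    (if η = 1 then Xv (i (2*mcur)) (i (2*mprev+1)) else Xv (i (2*mcur) + 1) (i (2*mprev)))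

/-- `φ_η^{(j,k)}` on a framed tuple whose last (unframed) index is `α`, with last entry `mcur`. -/
def phiF (i : ℕ → ℕ) (η j k : ℕ) (α mcur : ℕ) : KR :=
  if α = 0 then (if η = 1 then Xv j k else Xv (j+1) (k+1))
  else if α % 2 = 0 then (if η = 1 then Xv j (i (2*mcur+1)) else Xv (j+1) (i (2*mcur) + 1))
  else (if η = 1 then Xv (j+1) (i (2*mcur) + 1) else Xv j (i (2*mcur+1)))

/-- Membership condition for the Fibonacci tree `F_η^{(ν,μ)}`, for a tuple
`(g 0, g 1, …, g β)`. -/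
def tupCond (η ν μ β : ℕ) (g : ℕ → ℕ) : Prop :=
  g 0 = μ ∧ (∀ t ≤ β, ν ≤ g t ∧ g t ≤ μ) ∧
  (if η = 1 then
     ∀ t, 1 ≤ t → (2*t ≤ β → g (2*t) < g (2*t-1)) ∧ (2*t+1 ≤ β → g (2*t+1) ≤ g (2*t))
   else
     ∀ t, 1 ≤ t → (2*t-1 ≤ β → g (2*t-1) < g (2*t-2)) ∧ (2*t ≤ β → g (2*t) ≤ g (2*t-1)))

/-- The polynomial `D^P_{j,k}`, for the tuple `P` encoded by `(n, i)` and with the block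
indices `ν, μ` given.  (Any tuple in `F_η^{(ν,μ)}` has `β ≤ 2(μ-ν)+3`, so the sum below
ranges over all of `F_η^{(ν,μ)}`.) -/
def Dcore (n : ℕ) (i : ℕ → ℕ) (ν μ j k : ℕ) : KR :=
  ∑ η ∈ Finset.Icc 1 (numL n i ν μ j k), (-1 : KR)^(η-1) *
    ∑ β ∈ Finset.range (2*(μ - ν) + 4),
      ∑ g ∈ Finset.univ.filter (fun g : Fin (β+1) → Fin (μ+1) =>
          tupCond η ν μ β (fun t => if h : t < β+1 then (g ⟨t, h⟩ : ℕ) else 0)),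
        phiF i η j k β ((fun t => if h : t < β+1 then ((g ⟨t, h⟩ : Fin (μ+1)) : ℕ) else 0) β) *
        ∏ l ∈ Finset.range (β+1),
          phiT i η k l ((fun t => if h : t < β+1 then ((g ⟨t, h⟩ : Fin (μ+1)) : ℕ) else 0) l)
                       ((fun t => if h : t < β+1 then ((g ⟨t, h⟩ : Fin (μ+1)) : ℕ) else 0) (l-1))

/-- The blocks (if any) of the row label `j`. -/
def nuSet (n : ℕ) (i : ℕ → ℕ) (j : ℕ) : Finset ℕ :=
  (Finset.Icc 1 n).filter fun ν => i (2*ν-1) + 1 ≤ j ∧ j ≤ i (2*ν)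

/-- The blocks (if any) of the column label `k`. -/
def muSet (n : ℕ) (i : ℕ → ℕ) (k : ℕ) : Finset ℕ :=
  (Finset.Icc 1 n).filter fun μ => i (2*μ) + 1 ≤ k ∧ k ≤ i (2*μ+1)

/-- `D^P_{j,k}` with the block indices `ν, μ` computed from `j, k`; it is `0` when `(j,k)`
is not in the admissible range. -/
def Dfull (n : ℕ) (i : ℕ → ℕ) (j k : ℕ) : KR :=
  if (nuSet n i j).Nonempty ∧ (muSet n i k).Nonempty ∧
      (nuSet n i j).sup id ≤ (muSet n i k).sup id then
    Dcore n i ((nuSet n i j).sup id) ((muSet n i k).sup id) j k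
  else 0

/-- The indices of the pairs of `P` surviving in `P′`, in increasing order. -/
def survivors (n : ℕ) (i : ℕ → ℕ) : List ℕ :=
  ((Finset.Icc 1 n).filter fun j => i (2*j) ≠ i (2*j-1)).sort (· ≤ ·)

/-- The number of pairs of `P′`. -/
def nP' (n : ℕ) (i : ℕ → ℕ) : ℕ := (survivors n i).length

/-- The tuple `P′` (with the same conventions at indices `0` and `2n′+1`). -/
def iP' (m n : ℕ) (i : ℕ → ℕ) : ℕ → ℕ := fun t =>
  if t = 0 then 0
  else if t ≤ 2 * nP' n i then
    (if t % 2 = 1 then i (2 * ((survivors n i).getD ((t+1)/2 - 1) 0) - 1)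
     else i (2 * ((survivors n i).getD (t/2 - 1) 0)))
  else m - 3

/-- The polynomial `D̂^P_{j,k}`. -/
def Dhat (m n : ℕ) (i : ℕ → ℕ) (j k : ℕ) : KR :=
  if Apairs n i = ∅ then Dfull n i j k
  else Dfull (nP' n i) (iP' m n i) j k -
    ∑ b ∈ Apairs n i, Yv (i (2*b) + 1) (k + 1) * Dfull (nP' n i) (iP' m n i) j (i (2*b))

/-- The linear part `L^P_{j,k}`, given the block indices `ν, μ`. -/
def Lpoly (n : ℕ) (i : ℕ → ℕ) (ν μ j k : ℕ) : KR :=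
  if numL n i ν μ j k = 0 then 0
  else if numL n i ν μ j k = 1 then Xv j k
  else Xv j k - Xv (j+1) (k+1)

/-- The linear part `L^P_{j,k}`, with `ν, μ` computed from `j, k`. -/
def LpolyFull (n : ℕ) (i : ℕ → ℕ) (j k : ℕ) : KR :=
  Lpoly n i ((nuSet n i j).sup id) ((muSet n i k).sup id) j k

/-- The set `JK`. -/
def JKfin (m n : ℕ) (i : ℕ → ℕ) : Finset (ℕ × ℕ) :=
  ((Finset.Icc 1 (m-3)) ×ˢ (Finset.Icc 1 (m-3))).filter fun p =>
    ∃ ν ∈ Finset.Icc 1 n, ∃ μ ∈ Finset.Icc 1 n, ν ≤ μ ∧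
      i (2*ν-1) + 1 ≤ p.1 ∧ p.1 ≤ i (2*ν) ∧
      i (2*μ) + 1 ≤ p.2 ∧ p.2 ≤ i (2*μ+1) ∧
      numL n i ν μ p.1 p.2 ≠ 0 ∧ p.2 ∉ Aval n i

/-- The set of `(e_1(P)+1) × (e_1(P)+1)` minors of `N_1(P)`. -/
def minorSet (m n : ℕ) (i : ℕ → ℕ) : Set KR :=
  { d | ∃ rsel : Fin (e1P n i + 1) → ℕ, ∃ csel : Fin (e1P n i + 1) → ℕ,
      Function.Injective rsel ∧ Function.Injective csel ∧
      (∀ p, rsel p ∈ rowsFS m n i) ∧ (∀ p, csel p ∈ colsFS m) ∧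
      d = Matrix.det (Matrix.of fun p q : Fin (e1P n i + 1) =>
            N1e m n i (rsel p) (csel q)) }

/-- The ideal `J(P)` generated by the `(e_1(P)+1) × (e_1(P)+1)` minors of `N_1(P)`. -/
def Jideal (m n : ℕ) (i : ℕ → ℕ) : Ideal KR := Ideal.span (minorSet m n i)

/-- The ideal `K(P)` generated by the `D̂^P_{j,k}`, `(j,k) ∈ JK`. -/
def Kideal (m n : ℕ) (i : ℕ → ℕ) : Ideal KR :=
  Ideal.span { d | ∃ p ∈ JKfin m n i, d = Dhat m n i p.1 p.2 }

/-- The (encoded) labels of the rows removed from `N_1(P)` to form `A^P_{j,k}`. -/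
def rowRem (m n : ℕ) (i : ℕ → ℕ) (j : ℕ) : Finset ℕ :=
  (((Finset.Icc 1 n).biUnion fun β => Finset.Icc (i (2*β-1) + 1) (i (2*β) - 1)).image
      fun a => m + a) \ {m + j}

/-- The labels of the columns removed from `N_1(P)` to form `A^P_{j,k}`. -/
def colRem (m n : ℕ) (i : ℕ → ℕ) (k : ℕ) : Finset ℕ :=
  (((Finset.Icc 1 n).biUnion fun β => Finset.Icc (i (2*β) + 2) (i (2*β+1))) ∪ {m - 2}) \ {k + 1}

/-- The (encoded) labels of the rows of `A^P_{j,k}`. -/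
def keptRows (m n : ℕ) (i : ℕ → ℕ) (j : ℕ) : Finset ℕ := rowsFS m n i \ rowRem m n i j

/-- The labels of the columns of `A^P_{j,k}`. -/
def keptCols (m n : ℕ) (i : ℕ → ℕ) (k : ℕ) : Finset ℕ := colsFS m \ colRem m n i k

/-- The set of variables occurring in `N_1(P)`. -/
def Wfin (m n : ℕ) (i : ℕ → ℕ) : Finset KVar :=
  (rowsFS m n i).biUnion fun r => (colsFS m).biUnion fun b => (N1e m n i r b).vars


/-! ### Auxiliary material for the proof of Statement 8 -/

section Stmt8Aux

open MvPolynomial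

/-- Every `x`-variable `x(a,b)` occurring in `D^P_{j,k}` satisfies: it is `x(j,k)` itself,
or its row `a` exceeds `j`, or its column `b` is of the form `i(2t+1)` with `t+1 ≤ n`
and `b < k`. -/
def VPred (n : ℕ) (i : ℕ → ℕ) (j k : ℕ) (v : KVar) : Prop :=
  ∀ a b : ℕ, v = Sum.inl (a, b) →
    (a = j ∧ b = k) ∨ j < a ∨ (b < k ∧ ∃ t, 1 ≤ t ∧ t + 1 ≤ n ∧ b = i (2*t+1))

lemma vars_Xv (a b : ℕ) : (Xv a b).vars = {Sum.inl (a, b)} := MvPolynomial.vars_X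

lemma vp_phiT (n : ℕ) (i : ℕ → ℕ) (ν μ j k η α mc mp : ℕ)
    (hmono : ∀ s t : ℕ, s ≤ t → t ≤ 2*n+1 → i s ≤ i t)
    (hν : 1 ≤ ν) (hνμ : ν ≤ μ) (hμn : μ ≤ n)
    (hj : j ≤ i (2*ν)) (hk : i (2*μ) < k)
    (hmc : ν ≤ mc ∧ mc ≤ μ)
    (hmp : (2 ≤ α ∧ ((α % 2 = 0 ∧ η ≠ 1) ∨ (α % 2 ≠ 0 ∧ η = 1))) → 1 ≤ mp ∧ mp + 1 ≤ μ) :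
    ∀ v ∈ (phiT i η k α mc mp).vars, VPred n i j k v := by
  obtain ⟨hmc1, hmc2⟩ := hmc
  have hrow : j ≤ i (2*mc) := le_trans hj (hmono (2*ν) (2*mc) (by omega) (by omega))
  have hrow1 : j ≤ i (2*mc+1) := le_trans hj (hmono (2*ν) (2*mc+1) (by omega) (by omega))
  have hbad : (2 ≤ α ∧ ((α % 2 = 0 ∧ η ≠ 1) ∨ (α % 2 ≠ 0 ∧ η = 1))) →
      (i (2*mp+1) < k ∧ ∃ t, 1 ≤ t ∧ t + 1 ≤ n ∧ i (2*mp+1) = i (2*t+1)) := by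
    intro hcond
    obtain ⟨hmp1, hmp2⟩ := hmp hcond
    have h1 : i (2*mp+1) ≤ i (2*μ) := hmono (2*mp+1) (2*μ) (by omega) (by omega)
    exact ⟨by omega, mp, hmp1, by omega, rfl⟩
  intro v hv
  unfold phiT at hv
  split_ifs at hv with h0 h1 he h2 he2 he3
  · rw [MvPolynomial.vars_one] at hv; exact absurd hv (Finset.notMem_empty v)
  · -- α = 1, η = 1 : x(i(2mc), k)
    rw [vars_Xv, Finset.mem_singleton] at hv; subst hv
    intro a b heq
    simp only [Sum.inl.injEq, Prod.mk.injEq] at heq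
    obtain ⟨h1', h2'⟩ := heq; subst h1'; subst h2'
    rcases Nat.eq_or_lt_of_le hrow with h | h
    · exact Or.inl ⟨h.symm, rfl⟩
    · exact Or.inr (Or.inl h)
  · -- α = 1, η ≠ 1 : x(i(2mc+1)+1, k+1)
    rw [vars_Xv, Finset.mem_singleton] at hv; subst hv
    intro a b heq
    simp only [Sum.inl.injEq, Prod.mk.injEq] at heq
    obtain ⟨h1', h2'⟩ := heq; subst h1'; subst h2'
    exact Or.inr (Or.inl (by omega))
  · -- α even ≥ 2, η = 1 : x(i(2mc+1)+1, i(2mp)+1)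
    rw [vars_Xv, Finset.mem_singleton] at hv; subst hv
    intro a b heq
    simp only [Sum.inl.injEq, Prod.mk.injEq] at heq
    obtain ⟨h1', h2'⟩ := heq; subst h1'; subst h2'
    exact Or.inr (Or.inl (by omega))
  · -- α even ≥ 2, η ≠ 1 : x(i(2mc), i(2mp+1))
    rw [vars_Xv, Finset.mem_singleton] at hv; subst hv
    intro a b heq
    simp only [Sum.inl.injEq, Prod.mk.injEq] at heq
    obtain ⟨h1', h2'⟩ := heq; subst h1'; subst h2'
    exact Or.inr (Or.inr (hbad ⟨by omega, Or.inl ⟨h2, he2⟩⟩))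
  · -- α odd ≥ 3, η = 1 : x(i(2mc), i(2mp+1))
    rw [vars_Xv, Finset.mem_singleton] at hv; subst hv
    intro a b heq
    simp only [Sum.inl.injEq, Prod.mk.injEq] at heq
    obtain ⟨h1', h2'⟩ := heq; subst h1'; subst h2'
    exact Or.inr (Or.inr (hbad ⟨by omega, Or.inr ⟨h2, he3⟩⟩))
  · -- α odd ≥ 3, η ≠ 1 : x(i(2mc)+1, i(2mp))
    rw [vars_Xv, Finset.mem_singleton] at hv; subst hv
    intro a b heq
    simp only [Sum.inl.injEq, Prod.mk.injEq] at heq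
    obtain ⟨h1', h2'⟩ := heq; subst h1'; subst h2'
    exact Or.inr (Or.inl (by omega))

lemma vp_phiF (n : ℕ) (i : ℕ → ℕ) (ν μ j k η β mc : ℕ)
    (hmono : ∀ s t : ℕ, s ≤ t → t ≤ 2*n+1 → i s ≤ i t)
    (hν : 1 ≤ ν) (hνμ : ν ≤ μ) (hμn : μ ≤ n)
    (hj : j ≤ i (2*ν)) (hk : i (2*μ) < k)
    (hmc : (1 ≤ β ∧ ((β % 2 ≠ 0 ∧ η ≠ 1) ∨ (β % 2 = 0 ∧ η = 1))) → 1 ≤ mc ∧ mc + 1 ≤ μ) :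
    ∀ v ∈ (phiF i η j k β mc).vars, VPred n i j k v := by
  have hbad : (1 ≤ β ∧ ((β % 2 ≠ 0 ∧ η ≠ 1) ∨ (β % 2 = 0 ∧ η = 1))) →
      (i (2*mc+1) < k ∧ ∃ t, 1 ≤ t ∧ t + 1 ≤ n ∧ i (2*mc+1) = i (2*t+1)) := by
    intro hcond
    obtain ⟨hmp1, hmp2⟩ := hmc hcond
    have h1 : i (2*mc+1) ≤ i (2*μ) := hmono (2*mc+1) (2*μ) (by omega) (by omega)
    exact ⟨by omega, mc, hmp1, by omega, rfl⟩
  intro v hv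
  unfold phiF at hv
  split_ifs at hv with h0 he h2 he2 he3
  · -- β = 0, η = 1 : x(j,k)
    rw [vars_Xv, Finset.mem_singleton] at hv; subst hv
    intro a b heq
    simp only [Sum.inl.injEq, Prod.mk.injEq] at heq
    obtain ⟨h1', h2'⟩ := heq; subst h1'; subst h2'
    exact Or.inl ⟨rfl, rfl⟩
  · -- β = 0, η ≠ 1 : x(j+1,k+1)
    rw [vars_Xv, Finset.mem_singleton] at hv; subst hv
    intro a b heq
    simp only [Sum.inl.injEq, Prod.mk.injEq] at heq
    obtain ⟨h1', h2'⟩ := heq; subst h1'; subst h2'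
    exact Or.inr (Or.inl (by omega))
  · -- β even ≥ 1, η = 1 : x(j, i(2mc+1))
    rw [vars_Xv, Finset.mem_singleton] at hv; subst hv
    intro a b heq
    simp only [Sum.inl.injEq, Prod.mk.injEq] at heq
    obtain ⟨h1', h2'⟩ := heq; subst h1'; subst h2'
    exact Or.inr (Or.inr (hbad ⟨by omega, Or.inr ⟨h2, he2⟩⟩))
  · -- β even ≥ 1, η ≠ 1 : x(j+1, i(2mc)+1)
    rw [vars_Xv, Finset.mem_singleton] at hv; subst hv
    intro a b heq
    simp only [Sum.inl.injEq, Prod.mk.injEq] at heq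
    obtain ⟨h1', h2'⟩ := heq; subst h1'; subst h2'
    exact Or.inr (Or.inl (by omega))
  · -- β odd, η = 1 : x(j+1, i(2mc)+1)
    rw [vars_Xv, Finset.mem_singleton] at hv; subst hv
    intro a b heq
    simp only [Sum.inl.injEq, Prod.mk.injEq] at heq
    obtain ⟨h1', h2'⟩ := heq; subst h1'; subst h2'
    exact Or.inr (Or.inl (by omega))
  · -- β odd, η ≠ 1 : x(j, i(2mc+1))
    rw [vars_Xv, Finset.mem_singleton] at hv; subst hv
    intro a b heq
    simp only [Sum.inl.injEq, Prod.mk.injEq] at heq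
    obtain ⟨h1', h2'⟩ := heq; subst h1'; subst h2'
    exact Or.inr (Or.inr (hbad ⟨by omega, Or.inl ⟨h2, he3⟩⟩))

lemma vp_term (n : ℕ) (i : ℕ → ℕ) (ν μ j k η β : ℕ) (G : ℕ → ℕ)
    (hmono : ∀ s t : ℕ, s ≤ t → t ≤ 2*n+1 → i s ≤ i t)
    (hν : 1 ≤ ν) (hνμ : ν ≤ μ) (hμn : μ ≤ n)
    (hj : j ≤ i (2*ν)) (hk : i (2*μ) < k)
    (htup : tupCond η ν μ β G) :
    ∀ v ∈ (phiF i η j k β (G β) *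
      ∏ l ∈ Finset.range (β+1), phiT i η k l (G l) (G (l-1))).vars, VPred n i j k v := by
  unfold tupCond at htup
  obtain ⟨hg0, hbound, hstep⟩ := htup
  intro v hv
  rcases Finset.mem_union.mp (MvPolynomial.vars_mul _ _ hv) with h | h
  · refine vp_phiF n i ν μ j k η β (G β) hmono hν hνμ hμn hj hk ?_ v h
    rintro ⟨hβ1, hcase | hcase⟩
    · -- β odd, η ≠ 1
      rw [if_neg hcase.2] at hstep
      have h1 := (hstep ((β+1)/2) (by omega)).1 (by omega)
      have e1 : 2*((β+1)/2) - 1 = β := by omega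
      have e2 : 2*((β+1)/2) - 2 = β - 1 := by omega
      rw [e1, e2] at h1
      have h2 := (hbound (β-1) (by omega)).2
      have h3 := (hbound β (le_refl β)).1
      exact ⟨by omega, by omega⟩
    · -- β even ≥ 2, η = 1
      rw [if_pos hcase.2] at hstep
      have h1 := (hstep (β/2) (by omega)).1 (by omega)
      have e1 : 2*(β/2) = β := by omega
      rw [e1] at h1
      have h2 := (hbound (β-1) (by omega)).2
      have h3 := (hbound β (le_refl β)).1
      exact ⟨by omega, by omega⟩
  · obtain ⟨l, hl, h⟩ := Finset.mem_biUnion.mp (MvPolynomial.vars_prod _ h)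
    rw [Finset.mem_range] at hl
    refine vp_phiT n i ν μ j k η l (G l) (G (l-1)) hmono hν hνμ hμn hj hk
      ⟨(hbound l (by omega)).1, (hbound l (by omega)).2⟩ ?_ v h
    rintro ⟨hl2, hcase | hcase⟩
    · -- l even ≥ 2, η ≠ 1
      rw [if_neg hcase.2] at hstep
      have h1 := (hstep (l/2) (by omega)).1 (by omega)
      have e1 : 2*(l/2) - 1 = l - 1 := by omega
      have e2 : 2*(l/2) - 2 = l - 2 := by omega
      rw [e1, e2] at h1
      have h2 := (hbound (l-2) (by omega)).2
      have h3 := (hbound (l-1) (by omega)).1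
      exact ⟨by omega, by omega⟩
    · -- l odd ≥ 3, η = 1
      rw [if_pos hcase.2] at hstep
      have h1 := (hstep ((l-1)/2) (by omega)).1 (by omega)
      have e1 : 2*((l-1)/2) = l - 1 := by omega
      rw [e1] at h1
      rw [show l - 1 - 1 = l - 2 from by omega] at h1
      have h2 := (hbound (l-2) (by omega)).2
      have h3 := (hbound (l-1) (by omega)).1
      exact ⟨by omega, by omega⟩

lemma vp_Dcore (n : ℕ) (i : ℕ → ℕ) (ν μ j k : ℕ)
    (hmono : ∀ s t : ℕ, s ≤ t → t ≤ 2*n+1 → i s ≤ i t)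
    (hν : 1 ≤ ν) (hνμ : ν ≤ μ) (hμn : μ ≤ n)
    (hj : j ≤ i (2*ν)) (hk : i (2*μ) < k) :
    ∀ v ∈ (Dcore n i ν μ j k).vars, VPred n i j k v := by
  intro v hv
  unfold Dcore at hv
  obtain ⟨η, hη, hv⟩ := Finset.mem_biUnion.mp (MvPolynomial.vars_sum_subset _ _ hv)
  rcases Finset.mem_union.mp (MvPolynomial.vars_mul _ _ hv) with h | hv
  · exfalso
    have h2 := MvPolynomial.vars_pow (-1 : KR) (η-1) h
    rw [MvPolynomial.vars_neg, MvPolynomial.vars_one] at h2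
    exact Finset.notMem_empty v h2
  obtain ⟨β, hβ, hv⟩ := Finset.mem_biUnion.mp (MvPolynomial.vars_sum_subset _ _ hv)
  obtain ⟨g, hg, hv⟩ := Finset.mem_biUnion.mp (MvPolynomial.vars_sum_subset _ _ hv)
  rw [Finset.mem_filter] at hg
  exact vp_term n i ν μ j k η β _ hmono hν hνμ hμn hj hk hg.2 v hv

lemma vp_Dfull (n : ℕ) (i : ℕ → ℕ) (j k : ℕ)
    (hmono : ∀ s t : ℕ, s ≤ t → t ≤ 2*n+1 → i s ≤ i t) :
    ∀ v ∈ (Dfull n i j k).vars, VPred n i j k v := by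
  intro v hv
  unfold Dfull at hv
  split_ifs at hv with h
  · obtain ⟨h1, h2, h3⟩ := h
    obtain ⟨ν, hν, hνe⟩ := Finset.exists_mem_eq_sup (nuSet n i j) h1 id
    obtain ⟨μ, hμ, hμe⟩ := Finset.exists_mem_eq_sup (muSet n i k) h2 id
    simp only [id] at hνe hμe
    rw [hνe, hμe] at hv h3
    unfold nuSet at hν; unfold muSet at hμ
    rw [Finset.mem_filter, Finset.mem_Icc] at hν hμ
    exact vp_Dcore n i ν μ j k hmono hν.1.1 h3 hμ.1.2 hν.2.2 (by omega) v hv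
  · rw [MvPolynomial.vars_0] at hv; exact absurd hv (Finset.notMem_empty v)

lemma mono_i (m n : ℕ) (i : ℕ → ℕ) (h0 : i 0 = 0) (htop : i (2*n+1) = m - 3)
    (hub : ∀ t, 1 ≤ t → t ≤ 2*n → i t ≤ m - 3)
    (hle : ∀ t, 1 ≤ t → t ≤ n → i (2*t-1) ≤ i (2*t))
    (hlt : ∀ t, 1 ≤ t → t < n → i (2*t) < i (2*t+1)) :
    ∀ s t, s ≤ t → t ≤ 2*n+1 → i s ≤ i t := by
  have step : ∀ t, t + 1 ≤ 2*n+1 → i t ≤ i (t+1) := by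
    intro t ht
    rcases Nat.even_or_odd t with ⟨u, hu⟩ | ⟨u, hu⟩
    · by_cases h : u = 0
      · have ht0 : t = 0 := by omega
        rw [ht0, h0]; exact Nat.zero_le _
      · by_cases hn : u < n
        · have hx := hlt u (by omega) hn
          have e1 : 2*u = t := by omega
          rw [e1] at hx; omega
        · have h1 : i t ≤ m - 3 := hub t (by omega) (by omega)
          have h2 : i (t+1) = m - 3 := by rw [show t+1 = 2*n+1 by omega]; exact htop
          omega
    · have hx := hle (u+1) (by omega) (by omega)
      have e1 : 2*(u+1)-1 = t := by omega
      have e2 : 2*(u+1) = t+1 := by omega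
      rw [e1, e2] at hx; exact hx
  intro s t hst htn
  induction t with
  | zero => have hs0 : s = 0 := by omega
            rw [hs0]
  | succ t ih =>
    rcases Nat.lt_succ_iff_lt_or_eq.mp (Nat.lt_succ_of_le hst) with h | h
    · exact le_trans (ih (by omega) (by omega)) (step t htn)
    · rw [h]

lemma survivors_mem' {n : ℕ} {i : ℕ → ℕ} {x : ℕ} (hx : x ∈ survivors n i) :
    1 ≤ x ∧ x ≤ n := by
  unfold survivors at hx
  rw [Finset.mem_sort, Finset.mem_filter, Finset.mem_Icc] at hx
  exact ⟨hx.1.1, hx.1.2⟩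

lemma sU_lt (n : ℕ) (i : ℕ → ℕ) {u v : ℕ} (h1 : 1 ≤ u) (huv : u < v) (hv : v ≤ nP' n i) :
    (survivors n i).getD (u-1) 0 < (survivors n i).getD (v-1) 0 := by
  have hul : u - 1 < (survivors n i).length := by unfold nP' at hv; omega
  have hvl : v - 1 < (survivors n i).length := by unfold nP' at hv; omega
  rw [List.getD_eq_getElem _ _ hul, List.getD_eq_getElem _ _ hvl]
  have hs : List.Pairwise (· < ·) (survivors n i) := (Finset.sortedLT_sort _).pairwise
  have := hs.rel_get_of_lt (a := ⟨u-1, hul⟩) (b := ⟨v-1, hvl⟩) (by simp [Fin.lt_def]; omega)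
  simpa [List.get_eq_getElem] using this

lemma sU_mem (n : ℕ) (i : ℕ → ℕ) {u : ℕ} (h1 : 1 ≤ u) (hu : u ≤ nP' n i) :
    1 ≤ (survivors n i).getD (u-1) 0 ∧ (survivors n i).getD (u-1) 0 ≤ n := by
  have hul : u - 1 < (survivors n i).length := by unfold nP' at hu; omega
  rw [List.getD_eq_getElem _ _ hul]
  exact survivors_mem' (List.getElem_mem hul)

lemma sU_ge (n : ℕ) (i : ℕ → ℕ) :
    ∀ u, 1 ≤ u → u ≤ nP' n i → u ≤ (survivors n i).getD (u-1) 0 := by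
  intro u
  induction u with
  | zero => omega
  | succ u ih =>
    intro _ hu
    by_cases h : u = 0
    · subst h
      exact (sU_mem n i (le_refl 1) hu).1
    · have h1 := ih (by omega) (by omega)
      have h2 := sU_lt n i (u := u) (v := u+1) (by omega) (by omega) hu
      simp only [Nat.add_sub_cancel] at h2 ⊢
      omega

lemma mono_iP' (m n : ℕ) (i : ℕ → ℕ) (h0 : i 0 = 0) (htop : i (2*n+1) = m - 3)
    (hub : ∀ t, 1 ≤ t → t ≤ 2*n → i t ≤ m - 3)
    (hle : ∀ t, 1 ≤ t → t ≤ n → i (2*t-1) ≤ i (2*t))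
    (hlt : ∀ t, 1 ≤ t → t < n → i (2*t) < i (2*t+1)) :
    Monotone (iP' m n i) := by
  have hmono := mono_i m n i h0 htop hub hle hlt
  apply monotone_nat_of_le_succ
  intro t
  unfold iP'
  by_cases ht0 : t = 0
  · subst ht0
    simp only [if_pos rfl]
    exact Nat.zero_le _
  rw [if_neg ht0, if_neg (by omega : ¬ t+1 = 0)]
  by_cases ht1 : t ≤ 2 * nP' n i
  · rw [if_pos ht1]
    by_cases hpar : t % 2 = 1
    · have ht2 : t + 1 ≤ 2 * nP' n i := by omega
      rw [if_pos ht2, if_pos hpar, if_neg (by omega : ¬ (t+1) % 2 = 1)]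
      have e1 : (t+1)/2 = (t+1)/2 := rfl
      have hsu := sU_mem n i (u := (t+1)/2) (by omega) (by omega)
      exact hmono _ _ (by omega) (by omega)
    · by_cases ht2 : t + 1 ≤ 2 * nP' n i
      · rw [if_pos ht2, if_neg hpar, if_pos (by omega : (t+1) % 2 = 1)]
        have e1 : (t+1+1)/2 - 1 = t/2 := by omega
        rw [e1]
        have hlt' := sU_lt n i (u := t/2) (v := t/2 + 1) (by omega) (by omega) (by omega)
        simp only [Nat.add_sub_cancel] at hlt'
        have hsu := sU_mem n i (u := t/2 + 1) (by omega) (by omega)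
        simp only [Nat.add_sub_cancel] at hsu
        exact hmono _ _ (by omega) (by omega)
      · rw [if_neg ht2, if_neg hpar]
        have hsu := sU_mem n i (u := t/2) (by omega) (by omega)
        exact hub _ (by omega) (by omega)
  · rw [if_neg ht1, if_neg (by omega)]

lemma iP'_odd (m n : ℕ) (i : ℕ → ℕ) (t : ℕ) (h1 : 1 ≤ t) (h2 : t + 1 ≤ nP' n i) :
    ∃ t', 1 ≤ t' ∧ t' + 1 ≤ n ∧ iP' m n i (2*t+1) = i (2*t'+1) := by
  have hle2 : 2*t+1 ≤ 2 * nP' n i := by omega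
  have hmem := sU_mem n i (u := t+1) (by omega) h2
  have hge := sU_ge n i (t+1) (by omega) h2
  simp only [Nat.add_sub_cancel] at hmem hge
  refine ⟨(survivors n i).getD t 0 - 1, by omega, by omega, ?_⟩
  unfold iP'
  rw [if_neg (by omega), if_pos hle2, if_pos (by omega : (2*t+1) % 2 = 1)]
  have e1 : (2*t+1+1)/2 - 1 = t := by omega
  rw [e1]
  congr 1
  omega

lemma badcol_notJK (m n : ℕ) (i : ℕ → ℕ)
    (hmono : ∀ s t : ℕ, s ≤ t → t ≤ 2*n+1 → i s ≤ i t)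
    (htop : i (2*n+1) = m - 3) (p : ℕ × ℕ)
    (t' : ℕ) (h1 : 1 ≤ t') (h2 : t' + 1 ≤ n) (hb : p.2 = i (2*t'+1)) (hbm : p.2 < m - 3) :
    p ∉ JKfin m n i := by
  intro hp
  unfold JKfin at hp
  simp only [Finset.mem_filter] at hp
  obtain ⟨hmem, ν₁, hν₁, μ₁, hμ₁, hord, hj1, hj2, hk1, hk2, hnumL, hA⟩ := hp
  rw [Finset.mem_Icc] at hν₁ hμ₁
  unfold numL at hnumL
  split_ifs at hnumL with c1 c2 c3
  · rw [htop] at c1; omega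
  · rw [htop] at c2; omega
  · rcases le_or_gt (t'+1) μ₁ with h | h
    · have := hmono (2*t'+1) (2*μ₁) (by omega) (by omega)
      omega
    · have := hmono (2*μ₁+1) (2*t'+1) (by omega) (by omega)
      omega
  · exact hnumL rfl

lemma key_lemma (m n : ℕ) (i : ℕ → ℕ)
    (h0 : i 0 = 0) (htop : i (2*n+1) = m - 3)
    (hub : ∀ t, 1 ≤ t → t ≤ 2*n → i t ≤ m - 3)
    (hle : ∀ t, 1 ≤ t → t ≤ n → i (2*t-1) ≤ i (2*t))
    (hlt : ∀ t, 1 ≤ t → t < n → i (2*t) < i (2*t+1))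
    (j k : ℕ) (hq : (j, k) ∈ JKfin m n i)
    (p : ℕ × ℕ) (hp : p ∈ JKfin m n i)
    (hv : Sum.inl p ∈ (Dhat m n i j k).vars) : p = (j, k) ∨ j < p.1 := by
  have hmono := mono_i m n i h0 htop hub hle hlt
  have hmono2 : ∀ s t : ℕ, s ≤ t → t ≤ 2 * nP' n i + 1 → iP' m n i s ≤ iP' m n i t :=
    fun s t hst _ => mono_iP' m n i h0 htop hub hle hlt hst
  have hk3 : k ≤ m - 3 := by
    unfold JKfin at hq
    simp only [Finset.mem_filter, Finset.mem_product, Finset.mem_Icc] at hq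
    exact hq.1.2.2
  have hpA : p.2 ∉ Aval n i := by
    have hp' := hp
    unfold JKfin at hp'
    simp only [Finset.mem_filter] at hp'
    obtain ⟨-, ν₁, -, μ₁, -, -, -, -, -, -, -, hA⟩ := hp'
    exact hA
  obtain ⟨pa, pb⟩ := p
  unfold Dhat at hv
  split_ifs at hv with hAp
  · rcases vp_Dfull n i j k hmono _ hv pa pb rfl with ⟨h1, h2⟩ | h | ⟨hbk, t', ht1, ht2, hbt⟩
    · left; rw [h1, h2]
    · right; exact h
    · exact absurd hp (badcol_notJK m n i hmono htop (pa, pb) t' ht1 ht2 hbt (by omega))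
  · rcases Finset.mem_union.mp (MvPolynomial.vars_sub_subset _ hv) with h | h
    · rcases vp_Dfull (nP' n i) (iP' m n i) j k hmono2 _ h pa pb rfl with
        ⟨h1, h2⟩ | h' | ⟨hbk, t', ht1, ht2, hbt⟩
      · left; rw [h1, h2]
      · right; exact h'
      · obtain ⟨t'', h1'', h2'', he⟩ := iP'_odd m n i t' ht1 ht2
        exact absurd hp
          (badcol_notJK m n i hmono htop (pa, pb) t'' h1'' h2'' (hbt.trans he) (by omega))
    · obtain ⟨c, hc, h⟩ := Finset.mem_biUnion.mp (MvPolynomial.vars_sum_subset _ _ h)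
      rcases Finset.mem_union.mp (MvPolynomial.vars_mul _ _ h) with h | h
      · exfalso
        unfold Yv at h
        rw [MvPolynomial.vars_X, Finset.mem_singleton] at h
        exact absurd h (by simp)
      · have hcle : i (2*c) ≤ m - 3 := by
          have hc' := hc
          unfold Apairs at hc'
          rw [Finset.mem_filter, Finset.mem_Icc] at hc'
          exact hub (2*c) (by omega) (by omega)
        rcases vp_Dfull (nP' n i) (iP' m n i) j (i (2*c)) hmono2 _ h pa pb rfl with
          ⟨h1, h2⟩ | h' | ⟨hbk, t', ht1, ht2, hbt⟩
        · exfalso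
          apply hpA
          unfold Aval
          exact Finset.mem_image.mpr ⟨c, hc, h2.symm⟩
        · right; exact h'
        · obtain ⟨t'', h1'', h2'', he⟩ := iP'_odd m n i t' ht1 ht2
          exact absurd hp
            (badcol_notJK m n i hmono htop (pa, pb) t'' h1'' h2'' (hbt.trans he) (by omega))

end Stmt8Aux

/-- the relation `(j,k) → (j',k')` iff `x(j,k)` divides a monomial of total
degree at least `2` of `D̂^P_(j',k')` has no directed cycles: its reflexive-transitive
closure is antisymmetric (hence a partial order on `JK`). -/
theorem stmt8 (m n : ℕ) (i : ℕ → ℕ)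
    (hm : 3 ≤ m) (h0 : i 0 = 0) (htop : i (2*n+1) = m - 3)
    (hub : ∀ t, 1 ≤ t → t ≤ 2*n → i t ≤ m - 3)
    (hle : ∀ t, 1 ≤ t → t ≤ n → i (2*t-1) ≤ i (2*t))
    (hlt : ∀ t, 1 ≤ t → t < n → i (2*t) < i (2*t+1)) :
    ∀ p q : ℕ × ℕ,
      Relation.ReflTransGen (fun p q : ℕ × ℕ =>
        p ∈ JKfin m n i ∧ q ∈ JKfin m n i ∧
        ∃ d ∈ (Dhat m n i q.1 q.2).support, 2 ≤ d.sum (fun _ e => e) ∧ d (Sum.inl p) ≠ 0) p q →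
      Relation.ReflTransGen (fun p q : ℕ × ℕ =>
        p ∈ JKfin m n i ∧ q ∈ JKfin m n i ∧
        ∃ d ∈ (Dhat m n i q.1 q.2).support, 2 ≤ d.sum (fun _ e => e) ∧ d (Sum.inl p) ≠ 0) q p →
      p = q := by
  intro p q h1 h2
  have hkey : ∀ a b : ℕ × ℕ,
      (a ∈ JKfin m n i ∧ b ∈ JKfin m n i ∧
        ∃ d ∈ (Dhat m n i b.1 b.2).support, 2 ≤ d.sum (fun _ e => e) ∧ d (Sum.inl a) ≠ 0) →
      a = b ∨ b.1 < a.1 := by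
    rintro a b ⟨ha, hb, d, hd, -, hda⟩
    have hv : Sum.inl a ∈ (Dhat m n i b.1 b.2).vars :=
      (MvPolynomial.mem_vars _).mpr ⟨d, hd, Finsupp.mem_support_iff.mpr hda⟩
    have := key_lemma m n i h0 htop hub hle hlt b.1 b.2 (by simpa using hb) a ha hv
    rcases this with h | h
    · left; rw [h]
    · right; exact h
  have main : ∀ x y : ℕ × ℕ,
      Relation.ReflTransGen (fun p q : ℕ × ℕ =>
        p ∈ JKfin m n i ∧ q ∈ JKfin m n i ∧
        ∃ d ∈ (Dhat m n i q.1 q.2).support, 2 ≤ d.sum (fun _ e => e) ∧ d (Sum.inl p) ≠ 0) x y →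
      y.1 ≤ x.1 ∧ (y.1 = x.1 → y = x) := by
    intro x y h
    induction h with
    | refl => exact ⟨le_refl _, fun _ => rfl⟩
    | @tail b c hxb hbc ih =>
      rcases hkey b c hbc with h | h
      · rw [← h]; exact ih
      · refine ⟨by omega, fun he => ?_⟩
        omega
  have A := main p q h1
  have B := main q p h2
  exact (A.2 (by omega)).symm

end
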